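/- Let M be a matroid of rank k+1 (k ≥ 2) and L a rank-2 flat (line) of M. The hyperplanes of the principal truncation of L in M are precisely: the hyperplanes of M containing L, together with the rank-(k−1) flats of M that are skew to L. -/

import Mathlib

open Set
open scoped Classical

namespace MatroidPaper

variable {α : Type*}

/-- The rank of a set in a matroid: the supremum of cardinalities of independent subsets. -/
noncomputable def rkS (M : Matroid α) (X : Set α) : ℕ :=
  sSup {n | ∃ I, M.Indep I ∧ I ⊆ X ∧ I.ncard = n}

/-- The rank of a matroid. -/
noncomputable def rk (M : Matroid α) : ℕ := rkS M M.E

/-- A hyperplane: a flat of rank `rk M - 1`. -/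
def Hyp (M : Matroid α) (H : Set α) : Prop := M.IsFlat H ∧ rkS M H = rk M - 1

/-- Two sets are skew if the rank of their union is the sum of their ranks. -/
def SkewSets (M : Matroid α) (X Y : Set α) : Prop :=
  rkS M (X ∪ Y) = rkS M X + rkS M Y

/-- A simple matroid: every subset of the ground set with at most two elements is independent. -/
def SimpleM (M : Matroid α) : Prop := ∀ X ⊆ M.E, X.ncard ≤ 2 → M.Indep X

/-- A real-representable matroid. -/
def RealRep (M : Matroid α) : Prop :=
  ∃ (n : ℕ) (φ : α → (Fin n → ℝ)), ∀ I, I ⊆ M.E →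
    (M.Indep I ↔ LinearIndependent ℝ (fun x : I => φ x))

/-- A matroid is `k`-degenerate if it has rank at most one or its ground set is covered by
flats of rank at least two with `∑ (r(Fᵢ) - 1) ≤ k - 1`. -/
def Degen (M : Matroid α) (k : ℕ) : Prop :=
  rk M ≤ 1 ∨ ∃ (t : ℕ) (F : Fin t → Set α),
    (∀ i, M.IsFlat (F i) ∧ 2 ≤ rkS M (F i)) ∧
    M.E ⊆ ⋃ i, F i ∧ ∑ i, (rkS M (F i) - 1) ≤ k - 1

/-- A set `X` is `k`-degenerate in `M` if the restriction `M|X` is a `k`-degenerate matroid. -/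
def DegenSet (M : Matroid α) (X : Set α) (k : ℕ) : Prop := Degen (M.restrict X) k

/-- `N` is the (one-fold) principal truncation of `F` in `M`. -/
noncomputable def IsPT (M : Matroid α) (F : Set α) (N : Matroid α) : Prop :=
  N.E = M.E ∧ ∀ X ⊆ M.E,
    rkS N X = if F ⊆ M.closure X then rkS M X - 1 else rkS M X

/-- `N` is the complete principal truncation `M ÷ F` of `F` in `M`. -/
def IsCPT (M : Matroid α) (F : Set α) (N : Matroid α) : Prop :=
  N.E = M.E ∧ ∀ X ⊆ M.E,
    rkS N X = min (rkS M X + (rkS M F - 1)) (rkS M (X ∪ F)) - (rkS M F - 1)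

section Aux

variable {M : Matroid α} {X Y I J F H : Set α} {e : α}

lemma closure_flat' (M : Matroid α) (X : Set α) : M.IsFlat (M.closure X) := by
  rw [Matroid.closure_def]
  have hne : Nonempty {F // M.IsFlat F ∧ X ∩ M.E ⊆ F} := ⟨⟨M.E, M.ground_isFlat, inter_subset_right⟩⟩
  have h := Matroid.IsFlat.iInter (M := M)
    (Fs := fun F : {F // M.IsFlat F ∧ X ∩ M.E ⊆ F} => F.1) (fun F => F.2.1)
  convert h using 1
  rw [sInter_eq_iInter]
  rfl

lemma rkS_basis [M.Finite] (hI : M.IsBasis I X) : rkS M X = I.ncard := by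
  apply IsGreatest.csSup_eq
  constructor
  · exact ⟨I, hI.indep, hI.subset, rfl⟩
  · rintro n ⟨J, hJ, hJX, rfl⟩
    obtain ⟨I', hI', hJI'⟩ := hJ.subset_isBasis_of_subset hJX hI.subset_ground
    have h1 : J.ncard ≤ I'.ncard :=
      Set.ncard_le_ncard hJI' (M.set_finite I' hI'.indep.subset_ground)
    have h2 : I'.ncard = I.ncard :=
      hI'.isBase_restrict.ncard_eq_ncard_of_isBase hI.isBase_restrict
    omega

lemma le_rkS [M.Finite] (hJ : M.Indep J) (hJX : J ⊆ X) (hX : X ⊆ M.E) : J.ncard ≤ rkS M X := by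
  obtain ⟨I, hI⟩ := M.exists_isBasis X hX
  rw [rkS_basis hI]
  obtain ⟨I', hI', hJI'⟩ := hJ.subset_isBasis_of_subset hJX hX
  have h1 : J.ncard ≤ I'.ncard :=
    Set.ncard_le_ncard hJI' (M.set_finite I' hI'.indep.subset_ground)
  have h2 : I'.ncard = I.ncard := hI'.isBase_restrict.ncard_eq_ncard_of_isBase hI.isBase_restrict
  omega

lemma rkS_mono [M.Finite] (h : X ⊆ Y) (hY : Y ⊆ M.E) : rkS M X ≤ rkS M Y := by
  obtain ⟨I, hI⟩ := M.exists_isBasis X (h.trans hY)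
  rw [rkS_basis hI]
  exact le_rkS hI.indep (hI.subset.trans h) hY

lemma rkS_closure [M.Finite] (hX : X ⊆ M.E) : rkS M (M.closure X) = rkS M X := by
  obtain ⟨I, hI⟩ := M.exists_isBasis X hX
  rw [rkS_basis hI.isBasis_closure_right, rkS_basis hI]

lemma rkS_insert_of_not_mem_closure [M.Finite] (hX : X ⊆ M.E) (he : e ∈ M.E)
    (hecl : e ∉ M.closure X) : rkS M (insert e X) = rkS M X + 1 := by
  obtain ⟨I, hI⟩ := M.exists_isBasis X hX
  have heI : e ∉ M.closure I := by rwa [hI.closure_eq_closure]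
  have heI' : e ∉ I := fun h => heI (M.subset_closure I hI.indep.subset_ground h)
  have hind : M.Indep (insert e I) :=
    (hI.indep.insert_indep_iff_of_notMem heI').mpr ⟨he, heI⟩
  have hfin : I.Finite := M.set_finite I hI.indep.subset_ground
  have hub : (insert e I).ncard ≤ rkS M (insert e X) :=
    le_rkS hind (insert_subset_insert hI.subset) (insert_subset he hX)
  rw [Set.ncard_insert_of_notMem heI' hfin] at hub
  have hrX := rkS_basis hI
  -- upper bound: rkS (insert e X) ≤ rkS X + 1
  obtain ⟨J, hJ⟩ := M.exists_isBasis (insert e X) (insert_subset he hX)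
  have hJfin : J.Finite := M.set_finite J hJ.indep.subset_ground
  have h1 : (J \ {e}).ncard ≤ rkS M X :=
    le_rkS (hJ.indep.subset diff_subset) (by
      intro x hx
      rcases hJ.subset hx.1 with h | h
      · exact absurd h hx.2
      · exact h) hX
  have h2 : J.ncard ≤ (J \ {e}).ncard + 1 := by
    by_cases heJ : e ∈ J
    · rw [Set.ncard_diff_singleton_add_one heJ hJfin]
    · rw [Set.diff_singleton_eq_self heJ]; omega
  have := rkS_basis hJ
  omega

lemma rkS_insert_of_mem_closure [M.Finite] (hX : X ⊆ M.E)
    (hecl : e ∈ M.closure X) : rkS M (insert e X) = rkS M X := by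
  have h1 : rkS M (insert e X) ≤ rkS M (M.closure X) :=
    rkS_mono (insert_subset hecl (M.subset_closure X hX)) (M.closure_subset_ground X)
  rw [rkS_closure hX] at h1
  exact le_antisymm h1 (rkS_mono (subset_insert e X) (insert_subset (M.mem_ground_of_mem_closure hecl) hX))

lemma mem_closure_of_rkS_insert [M.Finite] (hX : X ⊆ M.E) (he : e ∈ M.E)
    (h : rkS M (insert e X) = rkS M X) : e ∈ M.closure X := by
  by_contra hecl
  rw [rkS_insert_of_not_mem_closure hX he hecl] at h
  omega

lemma closure_eq_of_rkS [M.Finite] (hXY : X ⊆ Y) (hY : Y ⊆ M.E)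
    (hr : rkS M X = rkS M Y) : M.closure X = M.closure Y := by
  obtain ⟨I, hI⟩ := M.exists_isBasis X (hXY.trans hY)
  obtain ⟨J, hJ, hIJ⟩ := hI.indep.subset_isBasis_of_subset (hI.subset.trans hXY) hY
  have hIJ' : I = J := Set.eq_of_subset_of_ncard_le hIJ
    (by rw [← rkS_basis hI, ← rkS_basis hJ, hr]) (M.set_finite J hJ.indep.subset_ground)
  rw [← hI.closure_eq_closure, hIJ', hJ.closure_eq_closure]

lemma rkS_union_le [M.Finite] (hX : X ⊆ M.E) (hY : Y ⊆ M.E) :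
    rkS M (X ∪ Y) ≤ rkS M X + rkS M Y := by
  obtain ⟨I, hI⟩ := M.exists_isBasis X hX
  obtain ⟨J, hJ, hIJ⟩ := hI.indep.subset_isBasis_of_subset (hI.subset.trans subset_union_left)
    (union_subset hX hY)
  have hJfin : J.Finite := M.set_finite J hJ.indep.subset_ground
  have hJX : J ∩ X = I := by
    refine (hI.eq_of_subset_indep (hJ.indep.subset inter_subset_left)
      (subset_inter hIJ hI.subset) inter_subset_right).symm
  have h1 : (J \ X).ncard ≤ rkS M Y :=
    le_rkS (hJ.indep.subset diff_subset)
      (fun x hx => (hJ.subset hx.1).elim (fun h => absurd h hx.2) id) hY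
  have h2 : (J ∩ X).ncard + (J \ X).ncard = J.ncard :=
    Set.ncard_inter_add_ncard_diff_eq_ncard J X hJfin
  rw [rkS_basis hJ, ← h2, hJX, ← rkS_basis hI]
  omega

lemma flat_iff_rkS [M.Finite] : M.IsFlat F ↔ F ⊆ M.E ∧
    ∀ e ∈ M.E, rkS M (insert e F) = rkS M F → e ∈ F := by
  constructor
  · intro hF
    refine ⟨hF.subset_ground, fun e he hr => ?_⟩
    have := mem_closure_of_rkS_insert hF.subset_ground he hr
    rwa [hF.closure] at this
  · rintro ⟨hsub, h2⟩
    have hcl : M.closure F = F := subset_antisymm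
      (fun e hecl => h2 e (M.mem_ground_of_mem_closure hecl)
        (rkS_insert_of_mem_closure hsub hecl))
      (M.subset_closure F hsub)
    exact hcl ▸ closure_flat' M F

lemma rkS_insert_le [M.Finite] (hX : X ⊆ M.E) (he : e ∈ M.E) :
    rkS M (insert e X) ≤ rkS M X + 1 := by
  by_cases h : e ∈ M.closure X
  · rw [rkS_insert_of_mem_closure hX h]; omega
  · rw [rkS_insert_of_not_mem_closure hX he h]

end Aux

/-- The hyperplanes of the principal truncation of a line `L` are exactly the hyperplanes of `M`
containing `L` together with the rank-`(k-1)` flats of `M` skew to `L`. -/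
theorem stmt7 (k : ℕ) (hk : 2 ≤ k) (M N : Matroid α) [M.Finite] (hs : SimpleM M)
    (hr : rk M = k + 1) (L : Set α) (hL : M.IsFlat L) (hL2 : rkS M L = 2)
    (hN : IsPT M L N) (H : Set α) :
    Hyp N H ↔ ((Hyp M H ∧ L ⊆ H) ∨
      (M.IsFlat H ∧ rkS M H = k - 1 ∧ SkewSets M H L)) := by
  obtain ⟨hNE, hNr⟩ := hN
  haveI hNfin : N.Finite := ⟨hNE ▸ M.ground_finite⟩
  have hLE : L ⊆ M.E := hL.subset_ground
  have hrkM : rkS M M.E = k + 1 := hr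
  have hrkN : rk N = k := by
    have h := hNr M.E subset_rfl
    rw [M.closure_ground, if_pos hLE] at h
    rw [rk, hNE, h, hrkM]; omega
  have hcl2 : ∀ X ⊆ M.E, L ⊆ M.closure X → 2 ≤ rkS M X := by
    intro X hX hLX
    have h := rkS_mono hLX (M.closure_subset_ground X)
    rwa [hL2, rkS_closure hX] at h
  constructor
  · rintro ⟨hFN, hrN⟩
    have hHE : H ⊆ M.E := hNE ▸ hFN.subset_ground
    rw [hrkN] at hrN
    by_cases hLH : L ⊆ M.closure H
    · left
      have hH1 := hNr H hHE; rw [if_pos hLH] at hH1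
      have h2 : 2 ≤ rkS M H := hcl2 H hHE hLH
      have hrMH : rkS M H = k := by omega
      have hFM : M.IsFlat H := by
        rw [flat_iff_rkS]
        refine ⟨hHE, fun e he hre => ?_⟩
        have hcl' : L ⊆ M.closure (insert e H) :=
          hLH.trans (M.closure_subset_closure (subset_insert e H))
        have h3 := hNr (insert e H) (insert_subset he hHE)
        rw [if_pos hcl'] at h3
        have h4 : 2 ≤ rkS M (insert e H) :=
          le_trans h2 (rkS_mono (subset_insert e H) (insert_subset he hHE))
        exact (flat_iff_rkS.mp hFN).2 e (by rw [hNE]; exact he) (by omega)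
      refine ⟨⟨hFM, ?_⟩, ?_⟩
      · rw [hrMH, hr]; omega
      · rwa [hFM.closure] at hLH
    · right
      have hH1 := hNr H hHE; rw [if_neg hLH] at hH1
      have hrMH : rkS M H = k - 1 := by omega
      have hFM : M.IsFlat H := by
        rw [flat_iff_rkS]
        refine ⟨hHE, fun e he hre => ?_⟩
        have hecl : e ∈ M.closure H := mem_closure_of_rkS_insert hHE he hre
        have hLH' : ¬ L ⊆ M.closure (insert e H) := by
          rwa [Matroid.closure_insert_eq_of_mem_closure hecl]
        have h3 := hNr (insert e H) (insert_subset he hHE)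
        rw [if_neg hLH'] at h3
        exact (flat_iff_rkS.mp hFN).2 e (by rw [hNE]; exact he) (by omega)
      refine ⟨hFM, hrMH, ?_⟩
      rw [SkewSets, hL2, hrMH]
      by_contra hne
      obtain ⟨e, heL, hecl⟩ := not_subset.mp hLH
      have heE : e ∈ M.E := hLE heL
      have heH : e ∉ H := fun h => hecl (M.subset_closure H hHE h)
      have hins : rkS M (insert e H) = rkS M H + 1 :=
        rkS_insert_of_not_mem_closure hHE heE hecl
      have hsubHL : insert e H ⊆ H ∪ L := insert_subset (Or.inr heL) subset_union_left
      have hHLE : H ∪ L ⊆ M.E := union_subset hHE hLE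
      have hle : rkS M (H ∪ L) ≤ rkS M H + 2 := by
        have h := rkS_union_le hHE hLE; rw [hL2] at h; exact h
      have hge : rkS M (insert e H) ≤ rkS M (H ∪ L) := rkS_mono hsubHL hHLE
      have hHL : rkS M (H ∪ L) = rkS M (insert e H) := by omega
      have hcleq : M.closure (insert e H) = M.closure (H ∪ L) :=
        closure_eq_of_rkS hsubHL hHLE hHL.symm
      have hLsub : L ⊆ M.closure (insert e H) := by
        rw [hcleq]
        exact subset_union_right.trans (M.subset_closure (H ∪ L) hHLE)
      have h3 := hNr (insert e H) (insert_subset heE hHE)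
      rw [if_pos hLsub] at h3
      exact heH ((flat_iff_rkS.mp hFN).2 e (by rw [hNE]; exact heE) (by omega))
  · have hflatN : ∀ hHE : H ⊆ M.E,
        (∀ e ∈ M.E, rkS N (insert e H) = rkS N H → e ∈ H) → N.IsFlat H := by
      intro hHE h
      rw [flat_iff_rkS]
      exact ⟨by rw [hNE]; exact hHE, fun e he => h e (by rwa [← hNE])⟩
    rintro (⟨⟨hFM, hrH⟩, hLH⟩ | ⟨hFM, hrH, hskew⟩)
    · have hHE : H ⊆ M.E := hFM.subset_ground
      have hrMH : rkS M H = k := by rw [hrH, hr]; omega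
      have hLcl : L ⊆ M.closure H := hLH.trans (M.subset_closure H hHE)
      have hH1 := hNr H hHE; rw [if_pos hLcl] at hH1
      refine ⟨hflatN hHE fun e he hre => ?_, by rw [hrkN]; omega⟩
      have hcl' : L ⊆ M.closure (insert e H) :=
        hLcl.trans (M.closure_subset_closure (subset_insert e H))
      have h3 := hNr (insert e H) (insert_subset he hHE)
      rw [if_pos hcl'] at h3
      have h4 : rkS M H ≤ rkS M (insert e H) :=
        rkS_mono (subset_insert e H) (insert_subset he hHE)
      have h5 : rkS M (insert e H) = rkS M H := by omega
      have := mem_closure_of_rkS_insert hHE he h5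
      rwa [hFM.closure] at this
    · have hHE : H ⊆ M.E := hFM.subset_ground
      rw [SkewSets, hL2, hrH] at hskew
      have hLH : ¬ L ⊆ M.closure H := by
        intro hLcl
        have h1 : rkS M (H ∪ L) ≤ rkS M H := by
          have h := rkS_mono (union_subset (M.subset_closure H hHE) hLcl)
            (M.closure_subset_ground H)
          rwa [rkS_closure hHE] at h
        omega
      have hH1 := hNr H hHE; rw [if_neg hLH] at hH1
      refine ⟨hflatN hHE fun e he hre => ?_, by rw [hrkN]; omega⟩
      by_cases hc : L ⊆ M.closure (insert e H)
      · exfalso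
        have h1 : H ∪ L ⊆ M.closure (insert e H) :=
          union_subset ((subset_insert e H).trans
            (M.subset_closure (insert e H) (insert_subset he hHE))) hc
        have h2 : rkS M (H ∪ L) ≤ rkS M (insert e H) := by
          have h := rkS_mono h1 (M.closure_subset_ground _)
          rwa [rkS_closure (insert_subset he hHE)] at h
        have h3 : rkS M (insert e H) ≤ rkS M H + 1 := rkS_insert_le hHE he
        omega
      · have h3 := hNr (insert e H) (insert_subset he hHE)
        rw [if_neg hc] at h3
        have h5 : rkS M (insert e H) = rkS M H := by omega
        have := mem_closure_of_rkS_insert hHE he h5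
        rwa [hFM.closure] at this

end MatroidPaper
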